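/- Let g(x) = x^N - Σ_{k=1}^{N-1} a_k x^{N-k} - (1 + a_N), where N ≥ 2, a_1 > 0, and a_k ≥ 0 are integers. Then g has exactly one positive real zero ψ, this zero is simple, and every other complex zero z of g satisfies |z| < ψ. -/

import Mathlib

open Complex

lemma domzero_aux_le (N : ℕ) (a : ℕ → ℕ) (c : ℝ) (hc : 0 < c)
    (ψ : ℝ) (hψ : 0 < ψ)
    (hroot : ψ ^ N = (∑ k ∈ Finset.Icc 1 (N - 1), (a k : ℝ) * ψ ^ (N - k)) + c)
    (t : ℝ) (ht : 0 < t) (hN : 1 ≤ N)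
    (hle : t ^ N ≤ (∑ k ∈ Finset.Icc 1 (N - 1), (a k : ℝ) * t ^ (N - k)) + c) :
    t ≤ ψ := by
  by_contra h
  push_neg at h
  have key : ∀ k ∈ Finset.Icc 1 (N - 1),
      (a k : ℝ) * t ^ (N - k) * ψ ^ N ≤ (a k : ℝ) * ψ ^ (N - k) * t ^ N := by
    intro k hk
    rw [Finset.mem_Icc] at hk
    have hkN : k ≤ N := le_trans hk.2 (Nat.sub_le N 1)
    have e1 : ψ ^ N = ψ ^ (N - k) * ψ ^ k := by rw [← pow_add, Nat.sub_add_cancel hkN]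
    have e2 : t ^ N = t ^ (N - k) * t ^ k := by rw [← pow_add, Nat.sub_add_cancel hkN]
    have h2 : ψ ^ k ≤ t ^ k := pow_le_pow_left₀ hψ.le h.le k
    have h3 : (a k : ℝ) * (t ^ (N - k) * ψ ^ (N - k)) * ψ ^ k
        ≤ (a k : ℝ) * (t ^ (N - k) * ψ ^ (N - k)) * t ^ k :=
      mul_le_mul_of_nonneg_left h2 (by positivity)
    calc (a k : ℝ) * t ^ (N - k) * ψ ^ N
        = (a k : ℝ) * (t ^ (N - k) * ψ ^ (N - k)) * ψ ^ k := by rw [e1]; ring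
      _ ≤ (a k : ℝ) * (t ^ (N - k) * ψ ^ (N - k)) * t ^ k := h3
      _ = (a k : ℝ) * ψ ^ (N - k) * t ^ N := by rw [e2]; ring
  have hsum := Finset.sum_le_sum key
  have hcs : c * ψ ^ N < c * t ^ N := by
    have := pow_lt_pow_left₀ h hψ.le (by omega : N ≠ 0)
    exact mul_lt_mul_of_pos_left this hc
  have h4 : t ^ N * ψ ^ N ≤ ((∑ k ∈ Finset.Icc 1 (N - 1), (a k : ℝ) * t ^ (N - k)) + c) * ψ ^ N :=
    mul_le_mul_of_nonneg_right hle (pow_pos hψ N).le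
  have h5 : ((∑ k ∈ Finset.Icc 1 (N - 1), (a k : ℝ) * ψ ^ (N - k)) + c) * t ^ N = ψ ^ N * t ^ N := by
    rw [← hroot]
  rw [add_mul, Finset.sum_mul] at h4 h5
  have h6 := Finset.sum_mul (Finset.Icc 1 (N-1)) (fun k => (a k : ℝ) * ψ ^ (N - k)) (t ^ N)
  linarith

/-- The polynomial `g(x) = x^N - Σ_{k=1}^{N-1} a_k x^{N-k} - (1+a_N)` has a
unique positive real zero `ψ`; this zero is simple, and every other complex
zero has absolute value `< ψ`. -/
theorem dominant_zero
    (N : ℕ) (hN : 2 ≤ N)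
    (a : ℕ → ℕ) (ha1 : 0 < a 1)
    (g : ℂ → ℂ)
    (hg : ∀ z : ℂ, g z =
      z ^ N - (∑ k ∈ Finset.Icc 1 (N - 1), (a k : ℂ) * z ^ (N - k)) - (1 + a N)) :
    ∃ ψ : ℝ, 0 < ψ ∧ g ψ = 0 ∧
      (∀ x : ℝ, 0 < x → g x = 0 → x = ψ) ∧
      deriv g ψ ≠ 0 ∧
      (∀ z : ℂ, g z = 0 → z ≠ (ψ : ℂ) → ‖z‖ < ψ) := by
  set s := Finset.Icc 1 (N - 1) with hs
  have h1mem : 1 ∈ s := Finset.mem_Icc.mpr ⟨le_refl 1, by omega⟩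
  set c : ℝ := 1 + a N with hc_def
  have hc : 0 < c := by positivity
  set F : ℝ → ℝ := fun x => x ^ N - (∑ k ∈ s, (a k : ℝ) * x ^ (N - k)) - c with hF
  have hgF : ∀ x : ℝ, g x = (F x : ℂ) := by
    intro x
    rw [hg, hF]
    push_cast [hc_def]
    ring
  have hFc : Continuous F := by
    rw [hF]; fun_prop
  set A : ℝ := ∑ k ∈ s, (a k : ℝ) with hA_def
  have hA : 0 ≤ A := Finset.sum_nonneg fun k _ => by positivity
  set S : ℝ := A + c + 1 with hS_def
  have hS1 : 1 ≤ S := by linarith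
  have hSpos : 0 < S := by linarith
  have hF1 : F 1 < 0 := by
    have hsum1 : ∑ k ∈ s, (a k : ℝ) * (1:ℝ) ^ (N - k) = A := by
      apply Finset.sum_congr rfl
      intro k _; rw [one_pow, mul_one]
    have ha1' : (1 : ℝ) ≤ a 1 := by exact_mod_cast ha1
    have hA1 : (a 1 : ℝ) ≤ A := Finset.single_le_sum (f := fun k => (a k : ℝ))
      (fun i _ => by positivity) h1mem
    have hF1e : F 1 = 1 ^ N - (∑ k ∈ s, (a k : ℝ) * (1:ℝ) ^ (N - k)) - c := rfl
    rw [hF1e, hsum1, one_pow]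
    linarith
  have hFS : 0 < F S := by
    have hSN : ∀ k ∈ s, (a k : ℝ) * S ^ (N - k) ≤ (a k : ℝ) * S ^ (N - 1) := by
      intro k hk
      rw [hs, Finset.mem_Icc] at hk
      exact mul_le_mul_of_nonneg_left (pow_le_pow_right₀ hS1 (by omega)) (by positivity)
    have hsum : (∑ k ∈ s, (a k : ℝ) * S ^ (N - k)) ≤ A * S ^ (N - 1) := by
      rw [hA_def, Finset.sum_mul]
      exact Finset.sum_le_sum hSN
    have hc' : c ≤ c * S ^ (N - 1) :=
      le_mul_of_one_le_right hc.le (one_le_pow₀ hS1)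
    have hSN' : S ^ N = S * S ^ (N - 1) := by
      conv_lhs => rw [show N = 1 + (N - 1) by omega, pow_add, pow_one]
    have hlt : (A + c) * S ^ (N - 1) < S * S ^ (N - 1) :=
      mul_lt_mul_of_pos_right (by linarith) (pow_pos hSpos _)
    have : F S = S ^ N - (∑ k ∈ s, (a k : ℝ) * S ^ (N - k)) - c := rfl
    rw [this, hSN']
    have := add_mul A c (S ^ (N - 1))
    linarith
  obtain ⟨ψ, hψmem, hψ0⟩ : ∃ ψ ∈ Set.Icc (1:ℝ) S, F ψ = 0 := by
    have h0 : (0 : ℝ) ∈ Set.Icc (F 1) (F S) := ⟨hF1.le, hFS.le⟩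
    have := intermediate_value_Icc hS1 hFc.continuousOn h0
    obtain ⟨ψ, h1, h2⟩ := this
    exact ⟨ψ, h1, h2⟩
  have hψpos : 0 < ψ := lt_of_lt_of_le one_pos hψmem.1
  have hroot : ψ ^ N = (∑ k ∈ s, (a k : ℝ) * ψ ^ (N - k)) + c := by
    have : F ψ = ψ ^ N - (∑ k ∈ s, (a k : ℝ) * ψ ^ (N - k)) - c := rfl
    rw [this] at hψ0
    linarith
  have key : ∀ t : ℝ, 0 < t →
      t ^ N ≤ (∑ k ∈ s, (a k : ℝ) * t ^ (N - k)) + c → t ≤ ψ :=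
    fun t ht hle => domzero_aux_le N a c hc ψ hψpos hroot t ht (by omega) hle
  refine ⟨ψ, hψpos, ?_, ?_, ?_, ?_⟩
  · rw [hgF, hψ0, Complex.ofReal_zero]
  · intro x hx hgx
    have hFx : F x = 0 := by
      rwa [hgF, Complex.ofReal_eq_zero] at hgx
    have hrootx : x ^ N = (∑ k ∈ s, (a k : ℝ) * x ^ (N - k)) + c := by
      have : F x = x ^ N - (∑ k ∈ s, (a k : ℝ) * x ^ (N - k)) - c := rfl
      rw [this] at hFx; linarith
    have h1 : x ≤ ψ := key x hx hrootx.le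
    have h2 : ψ ≤ x := domzero_aux_le N a c hc x hx hrootx ψ hψpos (by omega) hroot.le
    linarith
  · -- derivative nonzero
    have hgfun : g = fun z : ℂ => z ^ N - (∑ k ∈ s, (a k : ℂ) * z ^ (N - k)) - (1 + a N) :=
      funext hg
    have hd : HasDerivAt g
        ((N : ℂ) * (ψ : ℂ) ^ (N - 1) -
          ∑ k ∈ s, (a k : ℂ) * (((N - k : ℕ) : ℂ) * (ψ : ℂ) ^ (N - k - 1))) (ψ : ℂ) := by
      rw [hgfun]
      exact (((hasDerivAt_pow N (ψ : ℂ)).sub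
        (HasDerivAt.fun_sum fun k _ => ((hasDerivAt_pow (N - k) ((ψ : ℂ))).const_mul
          ((a k : ℂ))))).sub_const _)
    rw [hd.deriv]
    set D : ℝ := (N : ℝ) * ψ ^ (N - 1) -
      ∑ k ∈ s, (a k : ℝ) * (((N - k : ℕ) : ℝ) * ψ ^ (N - k - 1)) with hD_def
    have hcast : ((N : ℂ) * (ψ : ℂ) ^ (N - 1) -
        ∑ k ∈ s, (a k : ℂ) * (((N - k : ℕ) : ℂ) * (ψ : ℂ) ^ (N - k - 1))) = (D : ℂ) := by
      rw [hD_def]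
      push_cast
      ring
    rw [hcast]
    rw [Complex.ofReal_ne_zero]
    -- show 0 < ψ * D
    have e : ψ * D = (N : ℝ) * ψ ^ N - ∑ k ∈ s, (a k : ℝ) * (((N - k : ℕ) : ℝ) * ψ ^ (N - k)) := by
      rw [hD_def, mul_sub, Finset.mul_sum]
      congr 1
      · have hp : ψ ^ N = ψ ^ (N - 1) * ψ := by
          rw [← pow_succ]; congr 1; omega
        rw [hp]; ring
      · apply Finset.sum_congr rfl
        intro k hk
        rw [hs, Finset.mem_Icc] at hk
        have hp : ψ ^ (N - k) = ψ ^ (N - k - 1) * ψ := by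
          rw [← pow_succ]; congr 1; omega
        rw [hp]; ring
    have hle : ∑ k ∈ s, (a k : ℝ) * (((N - k : ℕ) : ℝ) * ψ ^ (N - k))
        ≤ ∑ k ∈ s, (N : ℝ) * ((a k : ℝ) * ψ ^ (N - k)) := by
      apply Finset.sum_le_sum
      intro k hk
      have h1 : ((N - k : ℕ) : ℝ) ≤ (N : ℝ) := by exact_mod_cast Nat.sub_le N k
      have h2 : 0 ≤ (a k : ℝ) * ψ ^ (N - k) := by positivity
      nlinarith [mul_le_mul_of_nonneg_right h1 h2]
    have hmulsum : ∑ k ∈ s, (N : ℝ) * ((a k : ℝ) * ψ ^ (N - k))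
        = (N : ℝ) * ∑ k ∈ s, (a k : ℝ) * ψ ^ (N - k) := (Finset.mul_sum _ _ _).symm
    have hψD : 0 < ψ * D := by
      have hNpos : (0 : ℝ) < N := by exact_mod_cast (by omega : 0 < N)
      have : (N : ℝ) * ψ ^ N = (N : ℝ) * ∑ k ∈ s, (a k : ℝ) * ψ ^ (N - k) + (N : ℝ) * c := by
        rw [hroot]; ring
      nlinarith
    intro hD0
    rw [hD0, mul_zero] at hψD
    exact lt_irrefl 0 hψD
  · intro z hz hzψ
    rw [hg] at hz
    have hz0 : z ≠ 0 := by
      intro h0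
      subst h0
      rw [zero_pow (by omega : N ≠ 0)] at hz
      rw [Finset.sum_eq_zero (fun k hk => by
        rw [hs, Finset.mem_Icc] at hk
        rw [zero_pow (by omega : N - k ≠ 0), mul_zero])] at hz
      have : (1 : ℂ) + (a N : ℂ) = 0 := by linear_combination -hz
      have : (1 + a N : ℕ) = 0 := by exact_mod_cast this
      omega
    set r : ℝ := ‖z‖ with hr_def
    have hrpos : 0 < r := by
      rw [hr_def]
      exact norm_pos_iff.mpr hz0
    have heq : z ^ N = (∑ k ∈ s, (a k : ℂ) * z ^ (N - k)) + (1 + (a N : ℂ)) := by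
      linear_combination hz
    have hcC : (1 + (a N : ℂ)) = ((c : ℝ) : ℂ) := by
      rw [hc_def]; push_cast; ring
    have habs : r ^ N ≤ (∑ k ∈ s, (a k : ℝ) * r ^ (N - k)) + c := by
      calc r ^ N = ‖z ^ N‖ := by rw [norm_pow]
        _ = ‖(∑ k ∈ s, (a k : ℂ) * z ^ (N - k)) + (1 + (a N : ℂ))‖ := by rw [heq]
        _ ≤ ‖∑ k ∈ s, (a k : ℂ) * z ^ (N - k)‖ + ‖1 + (a N : ℂ)‖ :=
            norm_add_le _ _
        _ ≤ (∑ k ∈ s, (a k : ℝ) * r ^ (N - k)) + c := by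
            apply add_le_add
            · refine le_trans (norm_sum_le _ _) (le_of_eq ?_)
              apply Finset.sum_congr rfl
              intro k _
              rw [norm_mul, norm_pow, Complex.norm_natCast]
            · rw [hcC, Complex.norm_of_nonneg hc.le]
    have hrψ : r ≤ ψ := key r hrpos habs
    rcases lt_or_eq_of_le hrψ with hlt | hEq
    · exact hlt
    · exfalso
      apply hzψ
      -- equality case: r = ψ, show z = ψ
      set w : ℂ := (starRingEnd ℂ) z with hw_def
      have hzw : z * w = (((r ^ 2 : ℝ)) : ℂ) := by
        rw [hw_def, Complex.mul_conj]
        norm_cast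
        rw [Complex.normSq_eq_norm_sq]
      have heq2 : z ^ N * w ^ N = (∑ k ∈ s, (a k : ℂ) * (z ^ (N - k) * w ^ N))
          + (1 + (a N : ℂ)) * w ^ N := by
        rw [Finset.sum_congr rfl (fun k _ => (mul_assoc ((a k : ℂ)) _ _).symm),
          ← Finset.sum_mul]
        linear_combination w ^ N * heq
      have hlhs : z ^ N * w ^ N = (((r ^ 2) ^ N : ℝ) : ℂ) := by
        rw [← mul_pow, hzw, ← Complex.ofReal_pow]
      have hre : ((r ^ 2) ^ N : ℝ)
          = (∑ k ∈ s, (a k : ℝ) * (z ^ (N - k) * w ^ N).re) + c * (w ^ N).re := by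
        have := congrArg Complex.re heq2
        rw [hlhs, hcC, Complex.ofReal_re] at this
        rw [this, Complex.add_re, Complex.re_sum]
        congr 1
        · apply Finset.sum_congr rfl
          intro k _
          rw [show ((a k : ℂ)) = (((a k : ℝ)) : ℂ) by push_cast; rfl, Complex.re_ofReal_mul]
        · rw [Complex.re_ofReal_mul]
      have hbound1 : ∀ k ∈ s, (z ^ (N - k) * w ^ N).re ≤ r ^ (N - k) * r ^ N := by
        intro k _
        refine le_trans (Complex.re_le_norm _) (le_of_eq ?_)
        rw [norm_mul, norm_pow, norm_pow, hw_def, Complex.norm_conj]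
      have hbound2 : (w ^ N).re ≤ r ^ N := by
        refine le_trans (Complex.re_le_norm _) (le_of_eq ?_)
        rw [norm_pow, hw_def, Complex.norm_conj]
      have hexp : ((r ^ 2) ^ N : ℝ)
          = (∑ k ∈ s, (a k : ℝ) * (r ^ (N - k) * r ^ N)) + c * r ^ N := by
        have h1 : ((r ^ 2) ^ N : ℝ) = r ^ N * r ^ N := by
          rw [← pow_mul, two_mul, pow_add]
        have hrootr : r ^ N = (∑ k ∈ s, (a k : ℝ) * r ^ (N - k)) + c := by
          rw [hEq]; exact hroot
        rw [h1]
        nth_rewrite 1 [hrootr]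
        rw [add_mul, Finset.sum_mul]
        congr 1
        apply Finset.sum_congr rfl
        intro k _; ring
      have htermle : ∀ k ∈ s, (a k : ℝ) * (z ^ (N - k) * w ^ N).re
          ≤ (a k : ℝ) * (r ^ (N - k) * r ^ N) := fun k hk =>
        mul_le_mul_of_nonneg_left (hbound1 k hk) (Nat.cast_nonneg _)
      have hcle : c * (w ^ N).re ≤ c * r ^ N := mul_le_mul_of_nonneg_left hbound2 hc.le
      have hsumle : ∑ k ∈ s, (a k : ℝ) * (z ^ (N - k) * w ^ N).re
          ≤ ∑ k ∈ s, (a k : ℝ) * (r ^ (N - k) * r ^ N) := Finset.sum_le_sum htermle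
      have hsumeq : ∑ k ∈ s, (a k : ℝ) * (z ^ (N - k) * w ^ N).re
          = ∑ k ∈ s, (a k : ℝ) * (r ^ (N - k) * r ^ N) := by linarith
      have hterm1 := (Finset.sum_eq_sum_iff_of_le htermle).mp hsumeq 1 h1mem
      have ha1' : (0 : ℝ) < a 1 := by exact_mod_cast ha1
      have hre1 : (z ^ (N - 1) * w ^ N).re = r ^ (N - 1) * r ^ N :=
        mul_left_cancel₀ (ne_of_gt ha1') hterm1
      -- compute z^(N-1) * w^N
      have hwN : w ^ N = w ^ (N - 1) * w := by
        rw [← pow_succ]; congr 1; omega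
      have hzw1 : z ^ (N - 1) * w ^ N = ((((r ^ 2) ^ (N - 1) : ℝ)) : ℂ) * w := by
        rw [hwN, ← mul_assoc, ← mul_pow, hzw, ← Complex.ofReal_pow]
      have hre2 : (z ^ (N - 1) * w ^ N).re = (r ^ 2) ^ (N - 1) * z.re := by
        rw [hzw1, Complex.re_ofReal_mul, hw_def, Complex.conj_re]
      have hrr : r ^ (N - 1) * r ^ N = (r ^ 2) ^ (N - 1) * r := by
        rw [← pow_mul, ← pow_succ, ← pow_add]
        congr 1
        omega
      have hzre : z.re = r := by
        have h1 : (r ^ 2) ^ (N - 1) * z.re = (r ^ 2) ^ (N - 1) * r := by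
          rw [← hre2, hre1, hrr]
        have h2 : (0 : ℝ) < (r ^ 2) ^ (N - 1) := by positivity
        exact mul_left_cancel₀ (ne_of_gt h2) h1
      have hzim : z.im = 0 := by
        have h1 : z.re ^ 2 + z.im ^ 2 = r ^ 2 := by
          rw [hr_def, Complex.sq_norm, Complex.normSq_apply]
          ring
        rw [hzre] at h1
        have : z.im ^ 2 = 0 := by linarith
        exact pow_eq_zero_iff (n := 2) (by omega) |>.mp this
      rw [hEq] at hzre
      exact Complex.ext hzre (by rw [hzim, Complex.ofReal_im])
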